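/- arXiv:math/0512347 — 7 statements merged into one kernel-verified Lean document; each statement's English description precedes it below -/
import Mathlib

section
/- For every m > 0 and every integer k ∈ ℤ, |sin(m φ(kπ/m))| ≤ m·e^{−|k|π/m}. -/
open Real

/-- For φ(u) = log(e^u + 1), m > 0 and k ∈ ℤ:
|sin(m φ(kπ/m))| ≤ m·e^{−|k|π/m}. -/
theorem abs_sin_m_phi_le (m : ℝ) (hm : 0 < m) (k : ℤ) :
    |Real.sin (m * Real.log (Real.exp (k * Real.pi / m) + 1))| ≤
      m * Real.exp (-(|k| * Real.pi / m)) := by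
  set u : ℝ := k * Real.pi / m with hu
  have hpos : (0 : ℝ) < Real.exp u + 1 := by positivity
  rcases le_or_gt 0 (k : ℝ) with hk | hk
  · -- k ≥ 0
    have habs : ((|k| : ℤ) : ℝ) = (k : ℝ) := by
      push_cast; exact abs_of_nonneg hk
    have hfac : Real.exp u + 1 = Real.exp u * (Real.exp (-u) + 1) := by
      rw [mul_add, ← Real.exp_add]; simp; ring
    have hsplit : Real.log (Real.exp u + 1) = u + Real.log (Real.exp (-u) + 1) := by
      rw [hfac, Real.log_mul (Real.exp_ne_zero u) (by positivity), Real.log_exp]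
    have hmu : m * u = k * Real.pi := by
      rw [hu]; field_simp
    have hsin : Real.sin (m * Real.log (Real.exp u + 1)) =
        (-1 : ℝ) ^ k * Real.sin (m * Real.log (Real.exp (-u) + 1)) := by
      rw [hsplit, mul_add, hmu, add_comm, Real.sin_add_int_mul_pi]
    have hone : |((-1 : ℝ) ^ k)| = 1 := by
      rcases Int.even_or_odd k with he | ho
      · rw [he.neg_one_zpow]; simp
      · rw [ho.neg_one_zpow]; simp
    rw [hsin, abs_mul, hone, one_mul]
    calc |Real.sin (m * Real.log (Real.exp (-u) + 1))|
        ≤ |m * Real.log (Real.exp (-u) + 1)| := Real.abs_sin_le_abs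
      _ = m * Real.log (Real.exp (-u) + 1) := by
          rw [abs_of_nonneg]
          have : (1:ℝ) ≤ Real.exp (-u) + 1 := le_add_of_nonneg_left (Real.exp_nonneg _)
          exact mul_nonneg hm.le (Real.log_nonneg this)
      _ ≤ m * Real.exp (-u) := by
          gcongr
          have := Real.log_le_sub_one_of_pos (x := Real.exp (-u) + 1) (by positivity)
          linarith
      _ = m * Real.exp (-(|k| * Real.pi / m)) := by rw [habs, hu]
  · -- k < 0
    have habs : ((|k| : ℤ) : ℝ) = -(k : ℝ) := by
      push_cast; exact abs_of_neg hk
    have hneg : -((|k| : ℤ) * Real.pi / m) = u := by rw [habs, hu]; ring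
    have hlog : 0 ≤ Real.log (Real.exp u + 1) :=
      Real.log_nonneg (le_add_of_nonneg_left (Real.exp_nonneg _))
    calc |Real.sin (m * Real.log (Real.exp u + 1))|
        ≤ |m * Real.log (Real.exp u + 1)| := Real.abs_sin_le_abs
      _ = m * Real.log (Real.exp u + 1) := abs_of_nonneg (mul_nonneg hm.le hlog)
      _ ≤ m * Real.exp u := by
          gcongr
          have := Real.log_le_sub_one_of_pos (x := Real.exp u + 1) (by positivity)
          linarith
      _ = m * Real.exp (-(|k| * Real.pi / m)) := by rw [hneg]
end

section
/- Let f : ℝ → ℝ, t > 0, m > 0, and let C_f ≥ 0 satisfy |f(x)| ≤ C_f for all x > 0. Then for every natural number n ≥ 1, the tail of the trapezoidal sum satisfies (π/m) · Σ_{k ∈ ℤ, |k| > n} |F_m(kπ/m)| ≤ (2 C_f m² / t) · e^{−nπ/m}. In particular |T_m − T_{n,m}| ≤ (2 C_f m² / t) e^{−nπ/m}, where T_m = (π/m) Σ_{k∈ℤ} F_m(kπ/m) and T_{n,m} = (π/m) Σ_{k=−n}^{n} F_m(kπ/m). -/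
open Real

/-- Truncation error of the trapezoidal sum for the transformed Fourier sine integral,
where F_m(u) = f((m/t)φ(u))·sin(m φ(u))·(m/t)φ'(u) and φ(u) = log(e^u + 1):
the tail of the sum over |k| > n is bounded by (2 C_f m²/t)·e^{−nπ/m}, and hence so is
|T_m − T_{n,m}|. -/
theorem trapezoidal_truncation_error (f : ℝ → ℝ) (t m : ℝ) (ht : 0 < t) (hm : 0 < m)
    (C_f : ℝ) (hCf : 0 ≤ C_f) (hf : ∀ x : ℝ, 0 < x → |f x| ≤ C_f)
    (F : ℝ → ℝ)
    (hF : ∀ u : ℝ, F u = f (m / t * Real.log (Real.exp u + 1)) *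
      Real.sin (m * Real.log (Real.exp u + 1)) * (m / t * (Real.exp u / (Real.exp u + 1))))
    (n : ℕ) (hn : 1 ≤ n) :
    Real.pi / m * (∑' k : {k : ℤ // (n : ℤ) < |k|}, |F (((k : ℤ) : ℝ) * Real.pi / m)|) ≤
      2 * C_f * m ^ 2 / t * Real.exp (-(n * Real.pi / m)) ∧
    |Real.pi / m * (∑' k : ℤ, F ((k : ℝ) * Real.pi / m)) -
        Real.pi / m * (∑ k ∈ Finset.Icc (-(n : ℤ)) (n : ℤ), F ((k : ℝ) * Real.pi / m))| ≤
      2 * C_f * m ^ 2 / t * Real.exp (-(n * Real.pi / m)) := by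
  have hm' : m ≠ 0 := hm.ne'
  have hπ : 0 < Real.pi := Real.pi_pos
  have ha : 0 < Real.pi / m := div_pos hπ hm
  set r : ℝ := Real.exp (-(Real.pi / m)) with hr_def
  have hr0 : 0 < r := Real.exp_pos _
  have hr1 : r < 1 := Real.exp_lt_one_iff.mpr (by linarith)
  have h1r : 0 < 1 - r := by linarith
  set C : ℝ := C_f * m ^ 2 / t with hC_def
  have hC0 : 0 ≤ C := by positivity
  -- pointwise bound
  have key : ∀ k : ℤ, |F ((k : ℝ) * Real.pi / m)| ≤ C * r ^ k.natAbs := by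
    intro k
    set u : ℝ := (k : ℝ) * Real.pi / m with hu_def
    have hexp : 0 < Real.exp u := Real.exp_pos u
    have hlog : 0 < Real.log (Real.exp u + 1) := Real.log_pos (by linarith)
    have harg : 0 < m / t * Real.log (Real.exp u + 1) := by positivity
    have hfb := hf _ harg
    have hq1 : Real.exp u / (Real.exp u + 1) ≤ 1 := by
      rw [div_le_one (by linarith)]; linarith
    have hcast : ((k.natAbs : ℝ)) = |(k : ℝ)| := by
      rw [Nat.cast_natAbs, Int.cast_abs]
    rw [hF, abs_mul, abs_mul,
      abs_of_nonneg (show (0:ℝ) ≤ m / t * (Real.exp u / (Real.exp u + 1)) by positivity)]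
    rcases le_or_gt 0 k with hk | hk
    · -- nonnegative k : use sin(kπ + θ) trick
      have hkR : (0:ℝ) ≤ (k : ℝ) := by exact_mod_cast hk
      have hru : r ^ k.natAbs = Real.exp (-u) := by
        rw [hr_def, ← Real.exp_nat_mul]
        congr 1
        rw [hcast, abs_of_nonneg hkR, hu_def]
        field_simp
      have h1 : Real.exp u + 1 = Real.exp u * (1 + Real.exp (-u)) := by
        rw [mul_add, mul_one, ← Real.exp_add]; simp
      have hsplit : m * Real.log (Real.exp u + 1)
          = (k : ℝ) * Real.pi + m * Real.log (1 + Real.exp (-u)) := by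
        rw [h1, Real.log_mul (Real.exp_ne_zero u) (by positivity), Real.log_exp, mul_add]
        congr 1
        rw [hu_def]; field_simp
      have hθ0 : 0 ≤ Real.log (1 + Real.exp (-u)) :=
        Real.log_nonneg (by nlinarith [Real.exp_pos (-u)])
      have hθle : Real.log (1 + Real.exp (-u)) ≤ Real.exp (-u) := by
        have := Real.log_le_sub_one_of_pos (show (0:ℝ) < 1 + Real.exp (-u) by positivity)
        linarith
      have hsin : |Real.sin (m * Real.log (Real.exp u + 1))| ≤ m * Real.exp (-u) := by
        rw [hsplit, Real.sin_add, Real.sin_int_mul_pi, zero_mul, zero_add, abs_mul]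
        calc |Real.cos ((k:ℝ) * Real.pi)| * |Real.sin (m * Real.log (1 + Real.exp (-u)))|
            ≤ 1 * |m * Real.log (1 + Real.exp (-u))| :=
              mul_le_mul (Real.abs_cos_le_one _) Real.abs_sin_le_abs (abs_nonneg _) zero_le_one
          _ = m * Real.log (1 + Real.exp (-u)) := by
              rw [one_mul, abs_of_nonneg (mul_nonneg hm.le hθ0)]
          _ ≤ m * Real.exp (-u) := mul_le_mul_of_nonneg_left hθle hm.le
      calc |f (m / t * Real.log (Real.exp u + 1))| *
            |Real.sin (m * Real.log (Real.exp u + 1))| *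
            (m / t * (Real.exp u / (Real.exp u + 1)))
          ≤ C_f * (m * Real.exp (-u)) * (m / t * 1) := by
            gcongr
          _ = C * r ^ k.natAbs := by rw [hru, hC_def]; field_simp
    · -- negative k : use |sin x| ≤ |x| and log(1+e^u) ≤ e^u
      have hkR : (k : ℝ) < 0 := by exact_mod_cast hk
      have hru : r ^ k.natAbs = Real.exp u := by
        rw [hr_def, ← Real.exp_nat_mul]
        congr 1
        rw [hcast, abs_of_neg hkR, hu_def]
        field_simp
      have hloge : Real.log (Real.exp u + 1) ≤ Real.exp u := by
        have := Real.log_le_sub_one_of_pos (show (0:ℝ) < Real.exp u + 1 by positivity)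
        linarith
      have hsin : |Real.sin (m * Real.log (Real.exp u + 1))| ≤ m * Real.exp u := by
        calc |Real.sin (m * Real.log (Real.exp u + 1))|
            ≤ |m * Real.log (Real.exp u + 1)| := Real.abs_sin_le_abs
          _ = m * Real.log (Real.exp u + 1) := abs_of_nonneg (by positivity)
          _ ≤ m * Real.exp u := mul_le_mul_of_nonneg_left hloge hm.le
      calc |f (m / t * Real.log (Real.exp u + 1))| *
            |Real.sin (m * Real.log (Real.exp u + 1))| *
            (m / t * (Real.exp u / (Real.exp u + 1)))
          ≤ C_f * (m * Real.exp u) * (m / t * 1) := by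
            gcongr
          _ = C * r ^ k.natAbs := by rw [hru, hC_def]; field_simp
  -- summability
  have hgeo : Summable (fun j : ℕ => C * r ^ j) :=
    (summable_geometric_of_lt_one hr0.le hr1).mul_left C
  have hgsum : Summable (fun k : ℤ => C * r ^ k.natAbs) := by
    apply Summable.of_nat_of_neg
    · simpa using hgeo
    · simpa using hgeo
  have habs_sum : Summable (fun k : ℤ => |F ((k : ℝ) * Real.pi / m)|) :=
    Summable.of_nonneg_of_le (fun _ => abs_nonneg _) key hgsum
  have hFsum : Summable (fun k : ℤ => F ((k : ℝ) * Real.pi / m)) := by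
    apply Summable.of_norm
    simpa only [Real.norm_eq_abs] using habs_sum
  -- tail of the geometric majorant
  set s : Set ℤ := {k : ℤ | (n : ℤ) < |k|} with hs_def
  set B : ℤ → ℝ := s.indicator (fun k : ℤ => C * r ^ k.natAbs) with hB_def
  have hBsum : Summable B := hgsum.indicator s
  have hBnat : Summable (fun j : ℕ => B (j : ℤ)) :=
    hBsum.comp_injective Nat.cast_injective
  have hBval : ∀ i : ℕ, B ((i + (n + 1) : ℕ) : ℤ) = C * r ^ (n + 1) * r ^ i := by
    intro i
    have hmem : ((i + (n + 1) : ℕ) : ℤ) ∈ s := by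
      simp only [hs_def, Set.mem_setOf_eq]
      rw [abs_of_nonneg (by positivity)]
      push_cast; omega
    rw [hB_def, Set.indicator_of_mem hmem]
    have : ((i + (n + 1) : ℕ) : ℤ).natAbs = i + (n + 1) := by
      omega
    rw [this, pow_add]
    ring
  have hBnat_eq : (∑' j : ℕ, B (j : ℤ)) = C * r ^ (n + 1) * (1 - r)⁻¹ := by
    have hsplit := Summable.sum_add_tsum_nat_add (f := fun j : ℕ => B (j : ℤ)) (n + 1) hBnat
    have hzero : (∑ i ∈ Finset.range (n + 1), B (i : ℤ)) = 0 := by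
      apply Finset.sum_eq_zero
      intro i hi
      rw [Finset.mem_range] at hi
      apply Set.indicator_of_notMem
      simp only [hs_def, Set.mem_setOf_eq, not_lt]
      rw [abs_of_nonneg (by positivity)]
      exact_mod_cast Nat.le_of_lt_succ hi
    have htail : (∑' i : ℕ, B ((i + (n + 1) : ℕ) : ℤ)) = C * r ^ (n + 1) * (1 - r)⁻¹ := by
      rw [tsum_congr hBval, tsum_mul_left, tsum_geometric_of_lt_one hr0.le hr1]
    rw [← hsplit, hzero, zero_add]
    exact_mod_cast htail
  have hBint : (∑' k : ℤ, B k) = 2 * (C * r ^ (n + 1) * (1 - r)⁻¹) := by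
    have h0 : B 0 = 0 := by
      apply Set.indicator_of_notMem
      simp only [hs_def, Set.mem_setOf_eq, abs_zero, not_lt]
      positivity
    have hsym : ∀ j : ℕ, B (j : ℤ) + B (-(j : ℤ)) = 2 * B (j : ℤ) := by
      intro j
      have : B (-(j : ℤ)) = B (j : ℤ) := by
        rw [hB_def]
        unfold Set.indicator
        simp only [hs_def, Set.mem_setOf_eq, abs_neg, Int.natAbs_neg]
      rw [this]; ring
    have hkey := tsum_nat_add_neg hBsum
    rw [tsum_congr hsym, tsum_mul_left, hBnat_eq, h0, add_zero] at hkey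
    exact hkey.symm
  -- the tail bound for the tsum over the subtype
  have hS_le : (∑' k : {k : ℤ // (n : ℤ) < |k|}, |F (((k : ℤ) : ℝ) * Real.pi / m)|)
      ≤ 2 * (C * r ^ (n + 1) * (1 - r)⁻¹) := by
    have h1 : (∑' k : {k : ℤ // (n : ℤ) < |k|}, |F (((k : ℤ) : ℝ) * Real.pi / m)|)
        ≤ ∑' k : {k : ℤ // (n : ℤ) < |k|}, C * r ^ ((k : ℤ)).natAbs :=
      Summable.tsum_le_tsum (fun k => key k) (habs_sum.subtype s) (hgsum.subtype s)
    have h2 : (∑' k : {k : ℤ // (n : ℤ) < |k|}, C * r ^ ((k : ℤ)).natAbs)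
        = ∑' k : ℤ, B k := by
      have h := tsum_subtype s (fun k : ℤ => C * r ^ k.natAbs)
      exact h
    rw [h2, hBint] at h1
    exact h1
  have hrn : Real.exp (-((n : ℝ) * Real.pi / m)) = r ^ n := by
    rw [hr_def, ← Real.exp_nat_mul]
    congr 1
    ring
  -- the key scalar inequality : (π/m) r ≤ 1 - r
  have har : Real.pi / m * r ≤ 1 - r := by
    have h := Real.add_one_le_exp (Real.pi / m)
    have hre : r * Real.exp (Real.pi / m) = 1 := by
      rw [hr_def, ← Real.exp_add]; simp
    nlinarith [hr0]
  have hmain : Real.pi / m * (2 * (C * r ^ (n + 1) * (1 - r)⁻¹)) ≤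
      2 * C_f * m ^ 2 / t * Real.exp (-((n : ℝ) * Real.pi / m)) := by
    have hrw : Real.pi / m * (2 * (C * r ^ (n + 1) * (1 - r)⁻¹))
        = (2 * C * r ^ n) * (Real.pi / m * r * (1 - r)⁻¹) := by
      rw [pow_succ]
      field_simp
    have h3 : Real.pi / m * r * (1 - r)⁻¹ ≤ 1 := by
      calc Real.pi / m * r * (1 - r)⁻¹ ≤ (1 - r) * (1 - r)⁻¹ :=
            mul_le_mul_of_nonneg_right har (inv_nonneg.2 h1r.le)
        _ = 1 := mul_inv_cancel₀ h1r.ne'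
    have h4 : Real.pi / m * (2 * (C * r ^ (n + 1) * (1 - r)⁻¹)) ≤ 2 * C * r ^ n := by
      rw [hrw]
      exact mul_le_of_le_one_right (by positivity) h3
    rw [hrn, hC_def]
    calc Real.pi / m * (2 * (C_f * m ^ 2 / t * r ^ (n + 1) * (1 - r)⁻¹))
        ≤ 2 * (C_f * m ^ 2 / t) * r ^ n := h4
      _ = 2 * C_f * m ^ 2 / t * r ^ n := by ring
  have part1 : Real.pi / m *
      (∑' k : {k : ℤ // (n : ℤ) < |k|}, |F (((k : ℤ) : ℝ) * Real.pi / m)|) ≤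
      2 * C_f * m ^ 2 / t * Real.exp (-(n * Real.pi / m)) := by
    calc Real.pi / m * (∑' k : {k : ℤ // (n : ℤ) < |k|}, |F (((k : ℤ) : ℝ) * Real.pi / m)|)
        ≤ Real.pi / m * (2 * (C * r ^ (n + 1) * (1 - r)⁻¹)) :=
          mul_le_mul_of_nonneg_left hS_le ha.le
      _ ≤ 2 * C_f * m ^ 2 / t * Real.exp (-((n : ℝ) * Real.pi / m)) := hmain
  refine ⟨part1, ?_⟩
  -- second part
  have hsplit := Summable.sum_add_tsum_subtype_compl hFsum (Finset.Icc (-(n : ℤ)) (n : ℤ))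
  have hdiff : Real.pi / m * (∑' k : ℤ, F ((k : ℝ) * Real.pi / m)) -
      Real.pi / m * (∑ k ∈ Finset.Icc (-(n : ℤ)) (n : ℤ), F ((k : ℝ) * Real.pi / m))
      = Real.pi / m * (∑' k : {k : ℤ // k ∉ Finset.Icc (-(n : ℤ)) (n : ℤ)},
          F (((k : ℤ) : ℝ) * Real.pi / m)) := by
    rw [← hsplit]; ring
  have hiff : ∀ k : ℤ, (n : ℤ) < |k| ↔ k ∉ Finset.Icc (-(n : ℤ)) (n : ℤ) := by
    intro k
    simp only [Finset.mem_Icc, not_and_or, not_le]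
    rw [lt_abs]
    omega
  have habs_sub : Summable (fun k : {k : ℤ // k ∉ Finset.Icc (-(n : ℤ)) (n : ℤ)} =>
      |F (((k : ℤ) : ℝ) * Real.pi / m)|) :=
    habs_sum.subtype {k : ℤ | k ∉ Finset.Icc (-(n : ℤ)) (n : ℤ)}
  have htsum_eq : (∑' k : {k : ℤ // k ∉ Finset.Icc (-(n : ℤ)) (n : ℤ)},
      |F (((k : ℤ) : ℝ) * Real.pi / m)|)
      = ∑' k : {k : ℤ // (n : ℤ) < |k|}, |F (((k : ℤ) : ℝ) * Real.pi / m)| := by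
    rw [← (Equiv.subtypeEquivRight hiff).tsum_eq
      (fun k : {k : ℤ // k ∉ Finset.Icc (-(n : ℤ)) (n : ℤ)} =>
        |F (((k : ℤ) : ℝ) * Real.pi / m)|)]
    exact tsum_congr fun a => by simp [Equiv.subtypeEquivRight]; rfl
  have hnormle : |∑' k : {k : ℤ // k ∉ Finset.Icc (-(n : ℤ)) (n : ℤ)},
      F (((k : ℤ) : ℝ) * Real.pi / m)|
      ≤ ∑' k : {k : ℤ // k ∉ Finset.Icc (-(n : ℤ)) (n : ℤ)},
      |F (((k : ℤ) : ℝ) * Real.pi / m)| := by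
    have := norm_tsum_le_tsum_norm (f := fun k : {k : ℤ // k ∉ Finset.Icc (-(n : ℤ)) (n : ℤ)} =>
      F (((k : ℤ) : ℝ) * Real.pi / m)) (by simpa only [Real.norm_eq_abs] using habs_sub)
    simpa only [Real.norm_eq_abs] using this
  rw [hdiff, abs_mul, abs_of_pos ha]
  calc Real.pi / m * |∑' k : {k : ℤ // k ∉ Finset.Icc (-(n : ℤ)) (n : ℤ)},
        F (((k : ℤ) : ℝ) * Real.pi / m)|
      ≤ Real.pi / m * (∑' k : {k : ℤ // (n : ℤ) < |k|}, |F (((k : ℤ) : ℝ) * Real.pi / m)|) := by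
        rw [← htsum_eq]
        exact mul_le_mul_of_nonneg_left hnormle ha.le
    _ ≤ 2 * C_f * m ^ 2 / t * Real.exp (-(n * Real.pi / m)) := part1
end

section
/- Let a ∈ ℝ, b > 0, t > 0, m > 0 with bt/m < π, and let w₀ = Log(e^{(a+ib)t/m} − 1). Then w₀ is a simple pole of F_m with lim_{w → w₀, w ≠ w₀} (w − w₀) · F_m(w) = sin((a+ib)t)/(2ib). -/
open Complex Filter Topology

/-- For F_m(w) = sin(m φ(w))·(m/t)φ'(w)/(((m/t)φ(w) − a)² + b²) with φ(w) = Log(e^w + 1),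
and bt/m < π, the point w₀ = Log(e^{(a+ib)t/m} − 1) is a simple pole of F_m with residue
sin((a+ib)t)/(2ib):  lim_{w → w₀, w ≠ w₀} (w − w₀)·F_m(w) = sin((a+ib)t)/(2ib). -/
theorem residue_of_transformed_integrand (a b t m : ℝ) (hb : 0 < b) (ht : 0 < t)
    (hm : 0 < m) (hbt : b * t / m < Real.pi) :
    Tendsto (fun w : ℂ =>
        (w - Complex.log (Complex.exp (((a : ℂ) + Complex.I * b) * t / m) - 1)) *
          (Complex.sin ((m : ℂ) * Complex.log (Complex.exp w + 1)) *
              ((m : ℂ) / t * (Complex.exp w / (Complex.exp w + 1))) /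
            (((m : ℂ) / t * Complex.log (Complex.exp w + 1) - a) ^ 2 + (b : ℂ) ^ 2)))
      (𝓝[≠] Complex.log (Complex.exp (((a : ℂ) + Complex.I * b) * t / m) - 1))
      (𝓝 (Complex.sin (((a : ℂ) + Complex.I * b) * t) / (2 * Complex.I * b))) := by
  have hm0 : (m : ℂ) ≠ 0 := Complex.ofReal_ne_zero.mpr hm.ne'
  have ht0 : (t : ℂ) ≠ 0 := Complex.ofReal_ne_zero.mpr ht.ne'
  have hb0 : (b : ℂ) ≠ 0 := Complex.ofReal_ne_zero.mpr hb.ne'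
  set c : ℂ := ((a : ℂ) + Complex.I * b) * t / m with hc
  have hbt0 : 0 < b * t / m := by positivity
  have hcim : c.im = b * t / m := by
    simp [hc, Complex.div_im, Complex.mul_im, Complex.add_im, Complex.add_re, Complex.mul_re]
    field_simp
  set E : ℂ := Complex.exp c with hE
  have hE0 : E ≠ 0 := Complex.exp_ne_zero c
  have hEim : 0 < E.im := by
    rw [hE, Complex.exp_im, hcim]
    exact mul_pos (Real.exp_pos _) (Real.sin_pos_of_pos_of_lt_pi hbt0 hbt)
  have hEslit : E ∈ Complex.slitPlane := Complex.mem_slitPlane_iff.mpr (Or.inr hEim.ne')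
  have hz0 : E - 1 ≠ 0 := by
    intro h
    have : E.im = 0 := by
      have : E = 1 := by linear_combination h
      simp [this]
    exact hEim.ne' this
  set w₀ : ℂ := Complex.log (E - 1) with hw₀
  have hexpw₀ : Complex.exp w₀ = E - 1 := Complex.exp_log hz0
  have hEw : Complex.exp w₀ + 1 = E := by rw [hexpw₀]; ring
  have hlogE : Complex.log E = c := by
    rw [hE]
    exact Complex.log_exp (by rw [hcim]; linarith [Real.pi_pos]) (by rw [hcim]; linarith)
  -- auxiliary functions
  set L : ℂ → ℂ := fun w => Complex.log (Complex.exp w + 1) with hL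
  have hLw₀ : L w₀ = c := by rw [hL]; simp only [hEw, hlogE]
  set N : ℂ → ℂ := fun w =>
    Complex.sin ((m : ℂ) * L w) * ((m : ℂ) / t * (Complex.exp w / (Complex.exp w + 1))) with hN
  set g : ℂ → ℂ := fun w => (m : ℂ) / t * L w - ((a : ℂ) + Complex.I * b) with hg
  set h : ℂ → ℂ := fun w => (m : ℂ) / t * L w - (a : ℂ) + Complex.I * b with hh
  have hmc : (m : ℂ) / t * c = (a : ℂ) + Complex.I * b := by
    rw [hc]; field_simp
  have hgw₀ : g w₀ = 0 := by rw [hg]; simp only [hLw₀, hmc]; ring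
  have hhw₀ : h w₀ = 2 * Complex.I * b := by rw [hh]; simp only [hLw₀, hmc]; ring
  -- derivative of g at w₀
  have hLderiv : HasDerivAt L (E⁻¹ * (E - 1)) w₀ := by
    have h1 : HasDerivAt (fun w : ℂ => Complex.exp w + 1) (E - 1) w₀ := by
      simpa [hexpw₀] using (Complex.hasDerivAt_exp w₀).add_const 1
    have h2 : HasDerivAt Complex.log E⁻¹ (Complex.exp w₀ + 1) := by
      rw [hEw]; exact Complex.hasDerivAt_log hEslit
    exact h2.comp w₀ h1
  set d : ℂ := (m : ℂ) / t * (E⁻¹ * (E - 1)) with hd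
  have hd0 : d ≠ 0 := by
    rw [hd]
    exact mul_ne_zero (div_ne_zero hm0 ht0) (mul_ne_zero (inv_ne_zero hE0) hz0)
  have hgderiv : HasDerivAt g d w₀ := (hLderiv.const_mul ((m : ℂ) / t)).sub_const _
  have hslope : Tendsto (fun w => (g w - g w₀) / (w - w₀)) (𝓝[≠] w₀) (𝓝 d) := by
    refine (hasDerivAt_iff_tendsto_slope.mp hgderiv).congr fun w => ?_
    rw [slope_def_field]
  -- continuity
  have hexpE : Complex.exp w₀ + 1 ≠ 0 := by rw [hEw]; exact hE0
  have hLcont : ContinuousAt L w₀ := by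
    apply ContinuousAt.comp (continuousAt_clog ?_)
      ((Complex.continuous_exp.continuousAt).add continuousAt_const)
    show Complex.exp w₀ + 1 ∈ Complex.slitPlane; rw [hEw]; exact hEslit
  have hNcont : ContinuousAt N w₀ := by
    apply ContinuousAt.mul
    · exact Complex.continuous_sin.continuousAt.comp (continuousAt_const.mul hLcont)
    · exact continuousAt_const.mul
        ((Complex.continuous_exp.continuousAt).div
          ((Complex.continuous_exp.continuousAt).add continuousAt_const) hexpE)
  have hhcont : ContinuousAt h w₀ := by
    exact ((continuousAt_const.mul hLcont).sub continuousAt_const).add continuousAt_const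
  have hNw₀ : N w₀ = Complex.sin (((a : ℂ) + Complex.I * b) * t) *
      ((m : ℂ) / t * ((E - 1) / E)) := by
    rw [hN]
    simp only [hLw₀, hexpw₀, hEw]
    rw [sub_add_cancel]
    congr 2
    rw [hc]; field_simp
  have hden0 : h w₀ * d ≠ 0 := by
    rw [hhw₀]
    exact mul_ne_zero (by simp [Complex.I_ne_zero, hb0]) hd0
  have hmain : Tendsto (fun w => N w / (h w * ((g w - g w₀) / (w - w₀))))
      (𝓝[≠] w₀) (𝓝 (N w₀ / (h w₀ * d))) := by
    apply Tendsto.div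
    · exact (hNcont.tendsto).mono_left nhdsWithin_le_nhds
    · exact ((hhcont.tendsto).mono_left nhdsWithin_le_nhds).mul hslope
    · exact hden0
  have hval : N w₀ / (h w₀ * d) =
      Complex.sin (((a : ℂ) + Complex.I * b) * t) / (2 * Complex.I * b) := by
    rw [hNw₀, hhw₀, hd]
    field_simp
  rw [hval] at hmain
  refine hmain.congr' ?_
  filter_upwards [self_mem_nhdsWithin] with w hw
  have hw' : w - w₀ ≠ 0 := sub_ne_zero.mpr hw
  have hfact : ((m : ℂ) / t * L w - a) ^ 2 + (b : ℂ) ^ 2 = g w * h w := by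
    rw [hg, hh]
    ring_nf
    rw [Complex.I_sq]
    ring
  rw [hgw₀, sub_zero]
  calc N w / (h w * (g w / (w - w₀)))
      = (w - w₀) * (N w / (g w * h w)) := by
        simp only [div_eq_mul_inv, mul_inv, inv_inv]
        ring
    _ = (w - w₀) * (N w / (((m : ℂ) / t * L w - a) ^ 2 + (b : ℂ) ^ 2)) := by rw [hfact]
end

section
/- Let a ∈ ℝ, b > 0 and t > 0. Then Im(Log(e^{(a+ib)t/m} − 1)) → arg(a + ib) as the real parameter m → ∞. In particular the limit equals arctan(b/a) if a > 0, equals π/2 if a = 0, and equals π − arctan(b/|a|) if a < 0. -/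
open Complex Filter Topology

/-- As m → ∞, the imaginary part v₀ of w₀ = Log(e^{(a+ib)t/m} − 1) tends to arg(a+ib),
which is arctan(b/a) for a > 0, π/2 for a = 0, and π − arctan(b/|a|) for a < 0. -/
theorem v0_tendsto_arg (a b t : ℝ) (hb : 0 < b) (ht : 0 < t) :
    Tendsto (fun m : ℝ =>
        (Complex.log (Complex.exp (((a : ℂ) + Complex.I * b) * t / m) - 1)).im) atTop
      (𝓝 (Complex.arg ((a : ℂ) + Complex.I * b))) ∧
    (0 < a → Complex.arg ((a : ℂ) + Complex.I * b) = Real.arctan (b / a)) ∧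
    (a = 0 → Complex.arg ((a : ℂ) + Complex.I * b) = Real.pi / 2) ∧
    (a < 0 → Complex.arg ((a : ℂ) + Complex.I * b) = Real.pi - Real.arctan (b / |a|)) := by
  set z : ℂ := (a : ℂ) + Complex.I * b with hz
  have hzre : z.re = a := by simp [hz]
  have hzim : z.im = b := by simp [hz]
  have hzslit : z ∈ Complex.slitPlane := Or.inr (by rw [hzim]; exact hb.ne')
  constructor
  · -- derivative of s ↦ exp(z s) at 0 is z
    have hd : HasDerivAt (fun s : ℝ => Complex.exp (z * s)) z 0 := by
      have : HasDerivAt (fun w : ℂ => Complex.exp (z * w)) z 0 := by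
        simpa using ((hasDerivAt_id (0 : ℂ)).const_mul z).cexp
      exact_mod_cast this.comp_ofReal
    have hslope : Tendsto (fun s : ℝ => s⁻¹ • (Complex.exp (z * s) - 1)) (𝓝[≠] 0) (𝓝 z) := by
      have := hasDerivAt_iff_tendsto_slope.mp hd
      refine this.congr' ?_
      filter_upwards [self_mem_nhdsWithin] with s _
      simp [slope_def_module]
    -- t/m → 0 within ≠ 0
    have hm : Tendsto (fun m : ℝ => t / m) atTop (𝓝[≠] (0 : ℝ)) := by
      apply tendsto_nhdsWithin_of_tendsto_nhds_of_eventually_within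
      · simpa [div_eq_mul_inv] using tendsto_inv_atTop_zero.const_mul t
      · filter_upwards [eventually_gt_atTop 0] with m hm
        exact (div_pos ht hm).ne'
    have hcomp := hslope.comp hm
    have harg := ((Complex.continuousAt_arg hzslit).tendsto).comp hcomp
    refine harg.congr' ?_
    filter_upwards [eventually_gt_atTop 0] with m hm0
    have htm : (0 : ℝ) < (t / m)⁻¹ := inv_pos.mpr (div_pos ht hm0)
    have hcast : z * (t / m : ℝ) = z * t / m := by push_cast; ring
    simp only [Function.comp_def, Complex.real_smul, hcast]
    rw [Complex.arg_real_mul _ htm, Complex.log_im]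
  refine ⟨fun ha => ?_, fun ha => ?_, fun ha => ?_⟩
  · -- a > 0
    have h1 : |Complex.arg z| < Real.pi / 2 :=
      Complex.abs_arg_lt_pi_div_two_iff.mpr (Or.inl (by rwa [hzre]))
    have := Complex.tan_arg z
    rw [hzim, hzre] at this
    rw [← this, Real.arctan_tan (abs_lt.mp h1).1 (abs_lt.mp h1).2]
  · -- a = 0
    subst ha
    have : z = (b : ℂ) * Complex.I := by rw [hz]; push_cast; ring
    rw [this, Complex.arg_real_mul _ hb, Complex.arg_I]
  · -- a < 0
    have hnegz : Complex.arg (-(-z)) = Complex.arg (-z) + Real.pi := by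
      apply Complex.arg_neg_eq_arg_add_pi_of_im_neg
      simp [hzim, hb]
    rw [neg_neg] at hnegz
    have h1 : |Complex.arg (-z)| < Real.pi / 2 := by
      apply Complex.abs_arg_lt_pi_div_two_iff.mpr
      exact Or.inl (by simp [hzre]; linarith)
    have htan := Complex.tan_arg (-z)
    have hre : (-z).re = -a := by simp [hzre]
    have him : (-z).im = -b := by simp [hzim]
    rw [hre, him] at htan
    have hargneg : Complex.arg (-z) = Real.arctan (-b / -a) := by
      rw [← htan, Real.arctan_tan (abs_lt.mp h1).1 (abs_lt.mp h1).2]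
    rw [hnegz, hargneg]
    rw [abs_of_neg ha]
    rw [neg_div_neg_eq, div_neg, Real.arctan_neg]
    ring
end

section
/- Let a ∈ ℝ, b > 0 and t > 0. Then m · ( Im(Log(e^{(a+ib)t/m} − 1)) − arg(a + ib) ) → bt/2 as the real parameter m → ∞; that is, v₀ = arg(a+ib) + bt/(2m) + o(1/m). -/
open Complex Filter Topology

/-- `(exp ζ - 1 - ζ)/ζ² → 1/2` as `ζ → 0` (ζ ≠ 0). -/
lemma aux_exp_quad : Tendsto (fun ζ : ℂ => (Complex.exp ζ - 1 - ζ) / ζ ^ 2)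
    (𝓝[≠] (0 : ℂ)) (𝓝 (1 / 2)) := by
  have key : Tendsto (fun ζ : ℂ => (Complex.exp ζ - 1 - ζ) / ζ ^ 2 - 1 / 2)
      (𝓝[≠] (0 : ℂ)) (𝓝 0) := by
    refine squeeze_zero_norm' (a := fun ζ : ℂ => (2 / 9 : ℝ) * ‖ζ‖) ?_ ?_
    · have h1 : ∀ᶠ ζ : ℂ in 𝓝[≠] (0 : ℂ), ‖ζ‖ ≤ 1 := by
        apply Filter.Eventually.filter_mono nhdsWithin_le_nhds
        filter_upwards [Metric.closedBall_mem_nhds (0 : ℂ) one_pos] with ζ hζ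
        simpa [Metric.mem_closedBall] using hζ
      filter_upwards [h1, self_mem_nhdsWithin] with ζ h1 (h2 : ζ ≠ 0)
      have hb := Complex.exp_bound (x := ζ) (by simpa using h1) (n := 3) (by norm_num)
      have hsum : (∑ m ∈ Finset.range 3, ζ ^ m / m.factorial) = 1 + ζ + ζ ^ 2 / 2 := by
        simp [Finset.sum_range_succ, Nat.factorial]
        try ring
      rw [hsum] at hb
      have heq : (Complex.exp ζ - 1 - ζ) / ζ ^ 2 - 1 / 2
          = (Complex.exp ζ - (1 + ζ + ζ ^ 2 / 2)) / ζ ^ 2 := by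
        field_simp
        try ring
      rw [heq]
      have hz2 : ‖ζ ^ 2‖ = ‖ζ‖ ^ 2 := by simp [norm_pow]
      rw [norm_div, hz2]
      have hzpos : (0 : ℝ) < ‖ζ‖ := norm_pos_iff.mpr h2
      rw [div_le_iff₀ (by positivity)]
      calc ‖Complex.exp ζ - (1 + ζ + ζ ^ 2 / 2)‖
          ≤ ‖ζ‖ ^ 3 * ((3 + 1 : ℕ) * ((Nat.factorial 3 : ℝ) * 3)⁻¹) := hb
        _ = (2 / 9 : ℝ) * ‖ζ‖ * ‖ζ‖ ^ 2 := by
            simp [Nat.factorial]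
            ring
        _ ≤ 2 / 9 * ‖ζ‖ * ‖ζ‖ ^ 2 := le_rfl
    · have : Tendsto (fun ζ : ℂ => (2 / 9 : ℝ) * ‖ζ‖) (𝓝 (0 : ℂ)) (𝓝 ((2 / 9 : ℝ) * ‖(0 : ℂ)‖)) :=
        (continuous_const.mul continuous_norm).tendsto 0
      simpa using this.mono_left nhdsWithin_le_nhds
  have := key.add_const (1 / 2 : ℂ)
  simpa using this

/-- Second-order behaviour of v₀ = Im(Log(e^{(a+ib)t/m} − 1)):
m·(v₀ − arg(a+ib)) → bt/2 as m → ∞, i.e. v₀ = arg(a+ib) + bt/(2m) + o(1/m). -/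
theorem v0_second_order (a b t : ℝ) (hb : 0 < b) (ht : 0 < t) :
    Tendsto (fun m : ℝ =>
        m * ((Complex.log (Complex.exp (((a : ℂ) + Complex.I * b) * t / m) - 1)).im -
          Complex.arg ((a : ℂ) + Complex.I * b))) atTop (𝓝 (b * t / 2)) := by
  set c : ℂ := (a : ℂ) + Complex.I * b with hc
  set w : ℂ := c * t with hwdef
  have hcim : c.im = b := by simp [hc]
  have hcre : c.re = a := by simp [hc]
  have hwim : w.im = b * t := by
    simp [hwdef, Complex.mul_im, hcim]
  have hc0' : c ≠ 0 := by
    intro h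
    rw [h] at hcim
    simp at hcim
    exact absurd hcim.symm hb.ne'
  have hw0 : w ≠ 0 := mul_ne_zero hc0' (by exact_mod_cast ht.ne')
  set θ : ℝ := Complex.arg c with hθ
  have hc0 : c ≠ 0 := hc0'
  have hθpos : 0 < θ := by
    rcases lt_or_eq_of_le (Complex.arg_nonneg_iff.mpr (by rw [hcim]; exact hb.le)) with h | h
    · exact h
    · exfalso
      have := Complex.arg_eq_zero_iff.mp h.symm
      rw [hcim] at this
      exact hb.ne' this.2
  have hθlt : θ < Real.pi := Complex.arg_lt_pi_iff.mpr (Or.inr (by rw [hcim]; exact hb.ne'))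
  -- the rescaled variable
  set z : ℝ → ℂ := fun m => w / m with hz
  have hz_ne : ∀ m : ℝ, 0 < m → z m ≠ 0 := by
    intro m hm
    simp only [hz, div_ne_zero_iff]
    exact ⟨hw0, by exact_mod_cast hm.ne'⟩
  have hz0 : Tendsto z atTop (𝓝 (0 : ℂ)) := by
    have h1 : Tendsto (fun m : ℝ => ((m⁻¹ : ℝ) : ℂ)) atTop (𝓝 0) := by
      have := tendsto_inv_atTop_zero (𝕜 := ℝ)
      simpa [Function.comp_def] using (Complex.continuous_ofReal.tendsto 0).comp this
    have := h1.const_mul w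
    simp only [mul_zero] at this
    apply this.congr'
    filter_upwards [eventually_gt_atTop (0 : ℝ)] with m hm
    simp [hz, div_eq_mul_inv, Complex.ofReal_inv]
  have hz0' : Tendsto z atTop (𝓝[≠] (0 : ℂ)) := by
    apply tendsto_nhdsWithin_of_tendsto_nhds_of_eventually_within _ hz0
    filter_upwards [eventually_gt_atTop (0 : ℝ)] with m hm
    exact hz_ne m hm
  -- the quadratic quotient
  set Q : ℝ → ℂ := fun m => (Complex.exp (z m) - 1 - z m) / (z m) ^ 2 with hQdef
  have hQ : Tendsto Q atTop (𝓝 (1 / 2)) := aux_exp_quad.comp hz0'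
  have hQne : ∀ᶠ m : ℝ in atTop, Q m ≠ 0 := hQ.eventually_ne (by norm_num)
  -- u m = (exp (z m) - 1)/(z m)
  set u : ℝ → ℂ := fun m => (Complex.exp (z m) - 1) / z m with hudef
  have hu_sub : ∀ᶠ m : ℝ in atTop, u m - 1 = Q m * z m := by
    filter_upwards [eventually_gt_atTop (0 : ℝ)] with m hm
    have hzm := hz_ne m hm
    simp only [hudef, hQdef]
    field_simp
  have hu1 : Tendsto u atTop (𝓝 1) := by
    have h1 : Tendsto (fun m => Q m * z m + 1) atTop (𝓝 ((1 / 2) * 0 + 1)) :=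
      (hQ.mul hz0).add_const 1
    simp only [mul_zero, zero_add] at h1
    apply h1.congr'
    filter_upwards [hu_sub] with m hm
    rw [← hm]; ring
  have hu_ne1 : ∀ᶠ m : ℝ in atTop, u m ≠ 1 := by
    filter_upwards [hu_sub, hQne, eventually_gt_atTop (0 : ℝ)] with m h1 h2 h3
    intro h
    rw [h, sub_self] at h1
    exact (mul_ne_zero h2 (hz_ne m h3)) h1.symm
  have hu1' : Tendsto u atTop (𝓝[≠] (1 : ℂ)) :=
    tendsto_nhdsWithin_of_tendsto_nhds_of_eventually_within _ hu1 hu_ne1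
  -- the slope of log at 1
  have hslope : Tendsto (fun v : ℂ => Complex.log v / (v - 1)) (𝓝[≠] (1 : ℂ)) (𝓝 1) := by
    have hd : HasDerivAt Complex.log ((1 : ℂ))⁻¹ 1 :=
      Complex.hasDerivAt_log one_mem_slitPlane
    have := hasDerivAt_iff_tendsto_slope.mp hd
    rw [inv_one] at this
    apply this.congr
    intro v
    simp [slope_def_field, Complex.log_one, div_eq_div_iff_comm]
  -- m * (u m - 1) → w / 2
  have hmu : Tendsto (fun m : ℝ => (m : ℂ) * (u m - 1)) atTop (𝓝 (w / 2)) := by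
    have h1 : Tendsto (fun m : ℝ => Q m * w) atTop (𝓝 ((1 / 2) * w)) := hQ.mul_const w
    have : (1 / 2 : ℂ) * w = w / 2 := by ring
    rw [this] at h1
    apply h1.congr'
    filter_upwards [hu_sub, eventually_gt_atTop (0 : ℝ)] with m h1 h2
    have hm0 : (m : ℂ) ≠ 0 := by exact_mod_cast h2.ne'
    rw [h1]
    simp only [hz]
    field_simp
    try ring
  -- m * log (u m) → w / 2
  have hmlog : Tendsto (fun m : ℝ => (m : ℂ) * Complex.log (u m)) atTop (𝓝 (w / 2)) := by
    have h1 : Tendsto (fun m : ℝ => (Complex.log (u m) / (u m - 1)) * ((m : ℂ) * (u m - 1)))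
        atTop (𝓝 (1 * (w / 2))) := (hslope.comp hu1').mul hmu
    rw [one_mul] at h1
    apply h1.congr'
    filter_upwards [hu_ne1] with m hm
    have : u m - 1 ≠ 0 := sub_ne_zero.mpr hm
    field_simp
  -- log (u m) → 0, hence arg (u m) → 0
  have hlogu : Tendsto (fun m : ℝ => Complex.log (u m)) atTop (𝓝 0) := by
    have := (continuousAt_clog one_mem_slitPlane).tendsto.comp hu1
    simpa [Complex.log_one, Function.comp_def] using this
  have hargu : Tendsto (fun m : ℝ => (Complex.log (u m)).im) atTop (𝓝 0) := by
    have := (Complex.continuous_im.tendsto 0).comp hlogu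
    simpa [Function.comp_def] using this
  -- eventually the argument of u m is small
  have hsmall : ∀ᶠ m : ℝ in atTop, |(Complex.log (u m)).im| < min θ (Real.pi - θ) := by
    have hpos : 0 < min θ (Real.pi - θ) := lt_min hθpos (by linarith)
    have := hargu.eventually (eventually_abs_sub_lt 0 hpos)
    simpa using this
  -- eventually u m ≠ 0
  have hu_ne0 : ∀ᶠ m : ℝ in atTop, u m ≠ 0 := hu1.eventually_ne one_ne_zero
  -- main eventual identity
  have hmain : ∀ᶠ m : ℝ in atTop,
      m * ((Complex.log (Complex.exp (w / m) - 1)).im - θ)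
        = ((m : ℂ) * Complex.log (u m)).im := by
    filter_upwards [hsmall, hu_ne0, eventually_gt_atTop (0 : ℝ)] with m h1 h2 h3
    have hzm := hz_ne m h3
    have hexp : Complex.exp (w / m) - 1 = z m * u m := by
      show Complex.exp (z m) - 1 = z m * u m
      simp only [hudef]
      rw [mul_comm]
      exact (div_mul_cancel₀ _ hzm).symm
    have hargz : Complex.arg (z m) = θ := by
      have hzeq : z m = ((t / m : ℝ) : ℂ) * c := by
        simp only [hz, hwdef]
        push_cast
        field_simp
      rw [hzeq, Complex.arg_real_mul c (div_pos ht h3)]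
    have hargsum : Complex.arg (z m) + Complex.arg (u m) ∈ Set.Ioc (-Real.pi) Real.pi := by
      rw [hargz]
      have h1' : |Complex.arg (u m)| < min θ (Real.pi - θ) := by
        rwa [← Complex.log_im]
      rw [abs_lt] at h1'
      constructor
      · have := h1'.1
        have := min_le_left θ (Real.pi - θ)
        nlinarith [Real.pi_pos]
      · have := h1'.2
        have := min_le_right θ (Real.pi - θ)
        linarith
    have hlogmul : Complex.log (z m * u m) = Complex.log (z m) + Complex.log (u m) :=
      Complex.log_mul hzm h2 hargsum
    rw [hexp, hlogmul]
    simp only [Complex.add_im, Complex.log_im, hargz]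
    have : ((m : ℂ) * Complex.log (u m)).im = m * (Complex.log (u m)).im := by
      simp [Complex.mul_im]
    rw [this, Complex.log_im]
    ring
  -- conclude
  have hfinal : Tendsto (fun m : ℝ => ((m : ℂ) * Complex.log (u m)).im) atTop
      (𝓝 ((w / 2).im)) := (Complex.continuous_im.tendsto _).comp hmlog
  have hwim2 : (w / 2).im = b * t / 2 := by
    rw [show (w / 2 : ℂ) = w * (1 / 2 : ℝ) by push_cast; ring]
    simp [Complex.mul_im, hwim]
    ring
  rw [hwim2] at hfinal
  exact hfinal.congr' (by filter_upwards [hmain] with m hm; rw [← hm])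
end

section
/- Let a > 0, b > 0 and t > 0. Then there exist constants C > 0 and M > 0 such that for all real m ≥ M, |R_m| ≤ C · e^{−2m·arctan(b/a)}, i.e. the residue contribution R_m satisfies R_m = O(e^{−2m arctan(b/a)}) as m → ∞. -/
open Complex Real

lemma my_abs_arctan_le (x : ℝ) : |Real.arctan x| ≤ |x| := by
  have key : ∀ y : ℝ, 0 ≤ y → Real.arctan y ≤ y := by
    intro y hy
    rcases eq_or_lt_of_le hy with h | h
    · simp [← h]
    · have h0 : 0 < Real.arctan y := by
        have := Real.arctan_strictMono h
        simpa using this.trans_le' (le_of_eq Real.arctan_zero.symm)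
      have h1 : Real.arctan y < π / 2 := Real.arctan_lt_pi_div_two y
      have := Real.lt_tan h0 h1
      rw [Real.tan_arctan] at this
      exact this.le
  rcases le_total 0 x with h | h
  · have h0 : 0 ≤ Real.arctan x := by
      have := Real.arctan_strictMono.monotone h
      simpa using this
    rw [_root_.abs_of_nonneg h0, _root_.abs_of_nonneg h]
    exact key x h
  · have h0 : Real.arctan x ≤ 0 := by
      have := Real.arctan_strictMono.monotone h
      simpa using this
    rw [abs_of_nonpos h0, abs_of_nonpos h, ← Real.arctan_neg]
    exact key (-x) (by linarith)

set_option maxHeartbeats 1000000 in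
/-- For a > 0: the residue contribution R_m (with u₀ + i v₀ = Log(e^{(a+ib)t/m} − 1))
satisfies R_m = O(e^{−2m·arctan(b/a)}) as m → ∞. -/
theorem residue_contribution_bound_pos (a b t : ℝ) (ha : 0 < a) (hb : 0 < b) (ht : 0 < t)
    (u₀ v₀ R : ℝ → ℝ)
    (hu : ∀ m : ℝ, u₀ m =
      (Complex.log (Complex.exp (((a : ℂ) + Complex.I * b) * t / m) - 1)).re)
    (hv : ∀ m : ℝ, v₀ m =
      (Complex.log (Complex.exp (((a : ℂ) + Complex.I * b) * t / m) - 1)).im)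
    (hR : ∀ m : ℝ, R m = Real.pi / b *
      (((Real.exp (-(2 * m * v₀ m)) - Real.cos (2 * m * u₀ m)) * Real.sin (a * t) *
          Real.cosh (b * t) +
        Real.sin (2 * m * u₀ m) * Real.cos (a * t) * Real.sinh (b * t)) /
        (Real.cosh (2 * m * v₀ m) - Real.cos (2 * m * u₀ m)))) :
    ∃ C M : ℝ, 0 < C ∧ 0 < M ∧ ∀ m : ℝ, M ≤ m →
      |R m| ≤ C * Real.exp (-(2 * m * Real.arctan (b / a))) := by
  set θ := Real.arctan (b / a) with hθdef
  have hθpos : 0 < θ := by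
    have := Real.arctan_strictMono (div_pos hb ha)
    simpa [hθdef] using this
  have hθlt : θ < π / 2 := Real.arctan_lt_pi_div_two _
  set z₀ : ℂ := (a : ℂ) + Complex.I * b with hz₀def
  have hz₀re : z₀.re = a := by simp [hz₀def]
  have hz₀im : z₀.im = b := by simp [hz₀def]
  have hz₀ne : z₀ ≠ 0 := by
    intro h
    rw [h] at hz₀re
    simp at hz₀re
    linarith
  have hargz₀ : z₀.arg = θ := by
    have h1 : |z₀.arg| < π / 2 :=
      Complex.abs_arg_lt_pi_div_two_iff.2 (Or.inl (by rw [hz₀re]; exact ha))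
    have h2 := Complex.tan_arg z₀
    rw [hz₀re, hz₀im] at h2
    have := Real.arctan_tan (x := z₀.arg) (by linarith [(abs_lt.1 h1).1])
      (abs_lt.1 h1).2
    rw [h2] at this
    rw [hθdef, ← this]
  set K := ‖z₀‖ * t with hKdef
  have hKpos : 0 < K := mul_pos (norm_pos_iff.mpr hz₀ne) ht
  set N₀ := 2 * Real.cosh (b * t) + Real.sinh (b * t) with hN₀def
  have hN₀pos : 0 < N₀ := by
    have := Real.cosh_pos (b * t)
    have := Real.sinh_pos_iff.2 (mul_pos hb ht)
    linarith
  refine ⟨π / b * N₀ * 4 * Real.exp (4 * K),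
    max (2 * K) ((1 + 2 * K) / θ), ?_, ?_, ?_⟩
  · have : 0 < π / b := div_pos Real.pi_pos hb
    positivity
  · exact lt_max_of_lt_left (by linarith)
  intro m hm
  have hm1 : 2 * K ≤ m := le_trans (le_max_left _ _) hm
  have hmpos : 0 < m := by linarith
  have hm2 : 1 + 2 * K ≤ m * θ := by
    have h := le_trans (le_max_right _ _) hm
    rw [div_le_iff₀ hθpos] at h
    linarith
  -- the complex point
  set w : ℂ := ((a : ℂ) + Complex.I * b) * t / m with hwdef
  have hwz₀ : w = z₀ * ((t / m : ℝ) : ℂ) := by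
    rw [hwdef, hz₀def]
    push_cast
    field_simp
  have habsw : ‖w‖ = K / m := by
    rw [hwz₀, norm_mul, Complex.norm_real, Real.norm_eq_abs, _root_.abs_of_pos (div_pos ht hmpos), hKdef]
    ring
  have hwne : w ≠ 0 := by
    rw [hwz₀]
    exact mul_ne_zero hz₀ne (by
      simp only [ne_eq, Complex.ofReal_eq_zero]
      positivity)
  have habsw_le : ‖w‖ ≤ 1 / 2 := by
    rw [habsw, div_le_iff₀ hmpos]
    linarith
  have hargw : w.arg = θ := by
    rw [hwz₀, Complex.arg_mul_real (div_pos ht hmpos) z₀, hargz₀]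
  set ε : ℂ := (Complex.exp w - 1 - w) / w with hεdef
  have hεabs : ‖ε‖ ≤ K / m := by
    rw [hεdef, norm_div]
    rw [div_le_iff₀ (norm_pos_iff.mpr hwne)]
    calc ‖Complex.exp w - 1 - w‖ ≤ ‖w‖ ^ 2 :=
          Complex.norm_exp_sub_one_sub_id_le (by linarith)
      _ = K / m * ‖w‖ := by rw [pow_two, habsw]
  have hεhalf : ‖ε‖ ≤ 1 / 2 := by
    refine hεabs.trans ?_
    rw [div_le_iff₀ hmpos]; linarith
  have hfact : Complex.exp w - 1 = w * (1 + ε) := by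
    rw [hεdef]
    field_simp
    ring
  have h1εre : (1 / 2 : ℝ) ≤ (1 + ε).re := by
    have h1 : |ε.re| ≤ ‖ε‖ := Complex.abs_re_le_norm ε
    have : -(1/2 : ℝ) ≤ ε.re := by
      have := (abs_le.1 h1).1
      linarith
    simp only [Complex.add_re, Complex.one_re]
    linarith
  have h1εne : (1 + ε) ≠ 0 := by
    intro h
    rw [h] at h1εre
    simp at h1εre
    linarith
  set φ := (1 + ε).arg with hφdef
  have hφtan : φ = Real.arctan (ε.im / (1 + ε).re) := by
    have h1 : |(1 + ε).arg| < π / 2 :=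
      Complex.abs_arg_lt_pi_div_two_iff.2 (Or.inl (by linarith))
    have h2 := Complex.tan_arg (1 + ε)
    have h3 : (1 + ε).im = ε.im := by simp
    rw [h3] at h2
    have h4 := Real.arctan_tan (x := (1 + ε).arg) (by linarith [(abs_lt.1 h1).1]) (abs_lt.1 h1).2
    rw [h2] at h4
    exact h4.symm
  have hφbound : |φ| ≤ 2 * K / m := by
    rw [hφtan]
    refine (my_abs_arctan_le _).trans ?_
    rw [abs_div]
    have him : |ε.im| ≤ K / m := (Complex.abs_im_le_norm ε).trans hεabs
    have hre : (1/2 : ℝ) ≤ |(1 + ε).re| := by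
      rw [_root_.abs_of_nonneg (by linarith)]
      exact h1εre
    calc |ε.im| / |(1 + ε).re| ≤ (K / m) / (1 / 2) := by
          exact div_le_div₀ (by positivity) him (by norm_num) hre
      _ = 2 * K / m := by ring
  -- argument of exp w - 1
  have hexpne : Complex.exp w - 1 ≠ 0 := by
    rw [hfact]
    exact mul_ne_zero hwne h1εne
  have hpi3 : (3 : ℝ) < π := Real.pi_gt_three
  have hφabs1 : |φ| ≤ 1 := by
    refine hφbound.trans ?_
    rw [div_le_one hmpos]; linarith
  have hargsum : (Complex.exp w - 1).arg = θ + φ := by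
    have hmem : w.arg + (1 + ε).arg ∈ Set.Ioc (-π) π := by
      rw [hargw, ← hφdef]
      constructor
      · linarith [(abs_le.1 hφabs1).1]
      · linarith [(abs_le.1 hφabs1).2]
    rw [hfact, Complex.arg_mul hwne h1εne hmem, hargw, ← hφdef]
  have hv₀ : v₀ m = θ + φ := by
    rw [hv m, Complex.log_im, ← hwdef, hargsum]
  -- key bounds on x = 2 m v₀
  have hxlb : 2 * m * θ - 4 * K ≤ 2 * m * v₀ m := by
    rw [hv₀]
    have h1 : -(2 * K / m) ≤ φ := by linarith [(abs_le.1 hφbound).1]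
    have h2 : 2 * m * (-(2 * K / m)) ≤ 2 * m * φ :=
      mul_le_mul_of_nonneg_left h1 (by linarith)
    have h3 : 2 * m * (-(2 * K / m)) = -(4 * K) := by field_simp; ring
    linarith
  have hx2 : 2 ≤ 2 * m * v₀ m := by linarith
  set x := 2 * m * v₀ m with hxdef
  set y := 2 * m * u₀ m with hydef
  -- denominator lower bound
  have hexp4 : (4 : ℝ) ≤ Real.exp x := by
    have h1 : Real.exp 2 ≤ Real.exp x := Real.exp_le_exp.2 hx2
    have h2 : (4 : ℝ) ≤ Real.exp 2 := by
      have he : (2 : ℝ) ≤ Real.exp 1 := by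
        have := Real.add_one_le_exp (1 : ℝ)
        linarith
      have h3 : Real.exp 2 = Real.exp 1 * Real.exp 1 := by
        rw [← Real.exp_add]; norm_num
      nlinarith [he]
    linarith
  have hD : Real.exp x / 4 ≤ Real.cosh x - Real.cos y := by
    have h1 : Real.cos y ≤ 1 := Real.cos_le_one y
    have h2 : Real.cosh x = (Real.exp x + Real.exp (-x)) / 2 := Real.cosh_eq x
    have h3 : 0 < Real.exp (-x) := Real.exp_pos _
    linarith
  have hDpos : 0 < Real.cosh x - Real.cos y := lt_of_lt_of_le (by positivity) hD
  -- numerator bound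
  have hnum : |(Real.exp (-x) - Real.cos y) * Real.sin (a * t) * Real.cosh (b * t) +
      Real.sin y * Real.cos (a * t) * Real.sinh (b * t)| ≤ N₀ := by
    have e1 : Real.exp (-x) ≤ 1 := Real.exp_le_one_iff.2 (by linarith)
    have e2 : 0 < Real.exp (-x) := Real.exp_pos _
    have c1 : |Real.cos y| ≤ 1 := Real.abs_cos_le_one y
    have s1 : |Real.sin (a * t)| ≤ 1 := Real.abs_sin_le_one _
    have s2 : |Real.sin y| ≤ 1 := Real.abs_sin_le_one y
    have c2 : |Real.cos (a * t)| ≤ 1 := Real.abs_cos_le_one _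
    have hch : 0 < Real.cosh (b * t) := Real.cosh_pos _
    have hsh : 0 < Real.sinh (b * t) := Real.sinh_pos_iff.2 (mul_pos hb ht)
    calc |(Real.exp (-x) - Real.cos y) * Real.sin (a * t) * Real.cosh (b * t) +
        Real.sin y * Real.cos (a * t) * Real.sinh (b * t)|
        ≤ |(Real.exp (-x) - Real.cos y) * Real.sin (a * t) * Real.cosh (b * t)| +
          |Real.sin y * Real.cos (a * t) * Real.sinh (b * t)| := abs_add_le _ _
      _ = |Real.exp (-x) - Real.cos y| * |Real.sin (a * t)| * Real.cosh (b * t) +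
          |Real.sin y| * |Real.cos (a * t)| * Real.sinh (b * t) := by
            rw [abs_mul, abs_mul, abs_mul, abs_mul,
              _root_.abs_of_pos hch, _root_.abs_of_pos hsh]
      _ ≤ N₀ := by
            have h5 : |Real.exp (-x) - Real.cos y| ≤ 2 := by
              rw [abs_sub_le_iff]
              refine ⟨?_, ?_⟩ <;> linarith [(abs_le.1 c1).1, (abs_le.1 c1).2]
            have t1 : |Real.exp (-x) - Real.cos y| * |Real.sin (a * t)| ≤ 2 := by
              calc |Real.exp (-x) - Real.cos y| * |Real.sin (a * t)| ≤ 2 * 1 :=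
                    mul_le_mul h5 s1 (abs_nonneg _) (by norm_num)
                _ = 2 := by norm_num
            have t2 : |Real.sin y| * |Real.cos (a * t)| ≤ 1 := by
              calc |Real.sin y| * |Real.cos (a * t)| ≤ 1 * 1 :=
                    mul_le_mul s2 c2 (abs_nonneg _) (by norm_num)
                _ = 1 := by norm_num
            have t1' : |Real.exp (-x) - Real.cos y| * |Real.sin (a * t)| * Real.cosh (b * t) ≤
                2 * Real.cosh (b * t) := mul_le_mul_of_nonneg_right t1 hch.le
            have t2' : |Real.sin y| * |Real.cos (a * t)| * Real.sinh (b * t) ≤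
                1 * Real.sinh (b * t) := mul_le_mul_of_nonneg_right t2 hsh.le
            rw [hN₀def]
            linarith
  -- put it together
  have hπb : 0 < π / b := div_pos Real.pi_pos hb
  have hRabs : |R m| ≤ π / b * (N₀ * (4 * Real.exp (-x))) := by
    rw [hR m, abs_mul, _root_.abs_of_pos hπb, abs_div, _root_.abs_of_pos hDpos]
    rw [← hxdef, ← hydef]
    apply mul_le_mul_of_nonneg_left _ hπb.le
    rw [div_le_iff₀ hDpos]
    have h1 : N₀ * (4 * Real.exp (-x)) * (Real.exp x / 4) = N₀ := by
      have h0 : Real.exp (-x) * Real.exp x = 1 := by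
        rw [← Real.exp_add]; simp
      calc N₀ * (4 * Real.exp (-x)) * (Real.exp x / 4)
          = N₀ * (Real.exp (-x) * Real.exp x) := by ring
        _ = N₀ := by rw [h0, mul_one]
    calc |(Real.exp (-x) - Real.cos y) * Real.sin (a * t) * Real.cosh (b * t) +
        Real.sin y * Real.cos (a * t) * Real.sinh (b * t)| ≤ N₀ := hnum
      _ = N₀ * (4 * Real.exp (-x)) * (Real.exp x / 4) := h1.symm
      _ ≤ N₀ * (4 * Real.exp (-x)) * (Real.cosh x - Real.cos y) := by
          apply mul_le_mul_of_nonneg_left hD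
          positivity
  refine hRabs.trans ?_
  have hexpx : Real.exp (-x) ≤ Real.exp (4 * K) * Real.exp (-(2 * m * θ)) := by
    rw [← Real.exp_add]
    apply Real.exp_le_exp.2
    rw [hxdef]
    linarith
  calc π / b * (N₀ * (4 * Real.exp (-x)))
      ≤ π / b * (N₀ * (4 * (Real.exp (4 * K) * Real.exp (-(2 * m * θ))))) := by
        apply mul_le_mul_of_nonneg_left _ hπb.le
        apply mul_le_mul_of_nonneg_left _ hN₀pos.le
        apply mul_le_mul_of_nonneg_left hexpx (by norm_num)
    _ = π / b * N₀ * 4 * Real.exp (4 * K) * Real.exp (-(2 * m * θ)) := by ring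
end

section
/- Let a = 0, b > 0 and t > 0. Then there exist constants C > 0 and M > 0 such that for all real m ≥ M, |R_m| ≤ C · e^{−πm}, i.e. the residue contribution R_m satisfies R_m = O(e^{−πm}) as m → ∞. -/
open Complex Real

/-- For a = 0: the residue contribution R_m (with u₀ + i v₀ = Log(e^{(a+ib)t/m} − 1))
satisfies R_m = O(e^{−πm}) as m → ∞. -/
theorem residue_contribution_bound_zero (a b t : ℝ) (ha : a = 0) (hb : 0 < b) (ht : 0 < t)
    (u₀ v₀ R : ℝ → ℝ)
    (hu : ∀ m : ℝ, u₀ m =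
      (Complex.log (Complex.exp (((a : ℂ) + Complex.I * b) * t / m) - 1)).re)
    (hv : ∀ m : ℝ, v₀ m =
      (Complex.log (Complex.exp (((a : ℂ) + Complex.I * b) * t / m) - 1)).im)
    (hR : ∀ m : ℝ, R m = Real.pi / b *
      (((Real.exp (-(2 * m * v₀ m)) - Real.cos (2 * m * u₀ m)) * Real.sin (a * t) *
          Real.cosh (b * t) +
        Real.sin (2 * m * u₀ m) * Real.cos (a * t) * Real.sinh (b * t)) /
        (Real.cosh (2 * m * v₀ m) - Real.cos (2 * m * u₀ m)))) :
    ∃ C M : ℝ, 0 < C ∧ 0 < M ∧ ∀ m : ℝ, M ≤ m →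
      |R m| ≤ C * Real.exp (-(Real.pi * m)) := by
  subst ha
  have hbt : 0 < b * t := mul_pos hb ht
  refine ⟨4 * Real.pi * Real.sinh (b * t) / b, b * t + 1, ?_, by linarith, ?_⟩
  · positivity
  intro m hm
  have hm1 : 1 < m := by linarith
  have hm0 : 0 < m := by linarith
  -- the angle
  set θ : ℝ := b * t / m with hθdef
  have hθ0 : 0 < θ := div_pos hbt hm0
  have hθ1 : θ < 1 := (div_lt_one hm0).2 (by linarith)
  have hθπ : θ < Real.pi := hθ1.trans (by linarith [Real.pi_gt_three])
  -- rewrite the complex exponent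
  have hexp : (((0:ℝ) : ℂ) + Complex.I * b) * t / m = (θ : ℂ) * Complex.I := by
    push_cast [hθdef]
    field_simp
    ring
  set z : ℂ := Complex.exp ((θ : ℂ) * Complex.I) - 1 with hzdef
  have hzre : z.re = Real.cos θ - 1 := by
    simp [hzdef, Complex.exp_ofReal_mul_I_re]
  have hzim : z.im = Real.sin θ := by
    simp [hzdef, Complex.exp_ofReal_mul_I_im]
  have him0 : 0 < z.im := by rw [hzim]; exact Real.sin_pos_of_pos_of_lt_pi hθ0 hθπ
  have hre0 : z.re ≤ 0 := by
    rw [hzre]; linarith [Real.cos_le_one θ]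
  have hz0 : z ≠ 0 := fun h => by simp [h] at him0
  -- v₀ m = arg z ≥ π/2
  have hv0 : v₀ m = Complex.arg z := by
    rw [hv m, hexp, Complex.log_im]
  have hvge : Real.pi / 2 ≤ v₀ m := by
    rw [hv0]
    by_contra h
    push_neg at h
    rcases Complex.arg_lt_pi_div_two_iff.1 h with h' | h' | h'
    · linarith
    · linarith
    · exact hz0 h'
  -- denominator bound
  have hD1 : Real.exp (Real.pi * m) / 2 ≤ Real.cosh (2 * m * v₀ m) := by
    have h1 : Real.pi * m ≤ 2 * m * v₀ m := by nlinarith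
    have h2 : Real.cosh (Real.pi * m) ≤ Real.cosh (2 * m * v₀ m) := by
      have := Real.cosh_le_cosh.2 (abs_le_abs h1 (by nlinarith [Real.pi_pos]))
      exact this
    have h3 : Real.exp (Real.pi * m) / 2 ≤ Real.cosh (Real.pi * m) := by
      rw [Real.cosh_eq]
      have := Real.exp_pos (-(Real.pi * m))
      linarith
    linarith
  have hE4 : (4 : ℝ) ≤ Real.exp (Real.pi * m) := by
    have h3 : (3 : ℝ) ≤ Real.pi * m := by nlinarith [Real.pi_gt_three]
    calc (4 : ℝ) = 3 + 1 := by norm_num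
    _ ≤ Real.exp 3 := Real.add_one_le_exp 3
    _ ≤ Real.exp (Real.pi * m) := Real.exp_le_exp.2 h3
  have hD : Real.exp (Real.pi * m) / 4 ≤
      Real.cosh (2 * m * v₀ m) - Real.cos (2 * m * u₀ m) := by
    have := Real.cos_le_one (2 * m * u₀ m)
    linarith
  have hDpos : 0 < Real.cosh (2 * m * v₀ m) - Real.cos (2 * m * u₀ m) := by
    have := Real.exp_pos (Real.pi * m)
    linarith
  -- numerator bound
  have hsinh : 0 < Real.sinh (b * t) := Real.sinh_pos_iff.2 hbt
  have hN : |((Real.exp (-(2 * m * v₀ m)) - Real.cos (2 * m * u₀ m)) * Real.sin (0 * t) *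
          Real.cosh (b * t) +
        Real.sin (2 * m * u₀ m) * Real.cos (0 * t) * Real.sinh (b * t))| ≤
      Real.sinh (b * t) := by
    simp only [zero_mul, Real.sin_zero, Real.cos_zero, mul_zero, zero_mul, mul_one, zero_add]
    rw [abs_mul]
    calc |Real.sin (2 * m * u₀ m)| * |Real.sinh (b * t)| ≤ 1 * |Real.sinh (b * t)| :=
      mul_le_mul_of_nonneg_right (Real.abs_sin_le_one _) (abs_nonneg _)
    _ = Real.sinh (b * t) := by rw [one_mul, abs_of_pos hsinh]
  -- combine
  rw [hR m, abs_mul, abs_div, abs_of_pos Real.pi_pos, abs_of_pos hb, abs_div,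
    abs_of_pos hDpos]
  have key : |((Real.exp (-(2 * m * v₀ m)) - Real.cos (2 * m * u₀ m)) * Real.sin (0 * t) *
          Real.cosh (b * t) +
        Real.sin (2 * m * u₀ m) * Real.cos (0 * t) * Real.sinh (b * t))| /
        (Real.cosh (2 * m * v₀ m) - Real.cos (2 * m * u₀ m)) ≤
      Real.sinh (b * t) / (Real.exp (Real.pi * m) / 4) :=
    div_le_div₀ hsinh.le hN (by positivity) hD
  calc Real.pi / b * (|_| / _) ≤
      Real.pi / b * (Real.sinh (b * t) / (Real.exp (Real.pi * m) / 4)) := by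
        exact mul_le_mul_of_nonneg_left key (by positivity)
  _ = 4 * Real.pi * Real.sinh (b * t) / b * Real.exp (-(Real.pi * m)) := by
      rw [Real.exp_neg]
      field_simp
end
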